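/- Let c be a real number with 0 < |c| < √2. Then the function η_c′ lies in the kernel of the Sturm–Liouville operator 𝓛_c: that is, for every x ∈ ℝ, −(d/dx)(η_c″(x)/(4·(1−η_c(x)))) + ((2 − c² − 6·η_c(x) + 3·η_c(x)²)/(4·(1−η_c(x))²))·η_c′(x) = 0. -/

import Mathlib

private lemma cosh_ne (t : ℝ) : Real.cosh t ≠ 0 := (Real.cosh_pos t).ne'

private lemma aux_lin (s x : ℝ) : HasDerivAt (fun y : ℝ => s * y) s x := by
  simpa using (hasDerivAt_id x).const_mul s

private lemma aux_cosh (s x : ℝ) :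
    HasDerivAt (fun y : ℝ => Real.cosh (s * y)) (Real.sinh (s * x) * s) x :=
  (Real.hasDerivAt_cosh (s * x)).comp x (aux_lin s x)

private lemma aux_sinh (s x : ℝ) :
    HasDerivAt (fun y : ℝ => Real.sinh (s * y)) (Real.cosh (s * x) * s) x :=
  (Real.hasDerivAt_sinh (s * x)).comp x (aux_lin s x)

private lemma aux1 (A s x : ℝ) :
    HasDerivAt (fun y : ℝ => A / (2 * Real.cosh (s * y) ^ 2))
      (-(A * s * Real.sinh (s * x)) / Real.cosh (s * x) ^ 3) x := by
  have h3 : HasDerivAt (fun y : ℝ => 2 * Real.cosh (s * y) ^ 2)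
      ((2:ℝ) * ((2:ℕ) * Real.cosh (s*x) ^ 1 * (Real.sinh (s*x) * s))) x :=
    ((aux_cosh s x).pow 2).const_mul 2
  have hC := cosh_ne (s*x)
  have h4 := (hasDerivAt_const x A).fun_div h3 (by positivity)
  refine h4.congr_deriv (Eq.symm ?_)
  field_simp
  ring

private lemma aux2 (A s x : ℝ) :
    HasDerivAt (fun y : ℝ => -(A * s * Real.sinh (s * y)) / Real.cosh (s * y) ^ 3)
      (A * s ^ 2 * (2 * Real.cosh (s * x) ^ 2 - 3) / Real.cosh (s * x) ^ 4) x := by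
  have hN : HasDerivAt (fun y : ℝ => -(A * s * Real.sinh (s * y)))
      (-((A * s) * (Real.cosh (s*x) * s))) x := ((aux_sinh s x).const_mul (A*s)).neg
  have hD : HasDerivAt (fun y : ℝ => Real.cosh (s*y) ^ 3)
      ((3:ℕ) * Real.cosh (s*x) ^ 2 * (Real.sinh (s*x) * s)) x := (aux_cosh s x).pow 3
  have hC := cosh_ne (s*x)
  have h := hN.fun_div hD (by positivity)
  refine h.congr_deriv (Eq.symm ?_)
  have hsq : Real.sinh (s*x) ^ 2 = Real.cosh (s*x) ^ 2 - 1 := Real.sinh_sq _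
  field_simp
  linear_combination (-3 * A * s^2) * hsq

private lemma aux3 (A s x : ℝ) (hA : A < 2) :
    HasDerivAt (fun y : ℝ => A * s ^ 2 * (2 * Real.cosh (s * y) ^ 2 - 3) /
        (2 * Real.cosh (s * y) ^ 2 * (2 * Real.cosh (s * y) ^ 2 - A)))
      (A * s ^ 3 * Real.sinh (s * x) *
          (12 * Real.cosh (s * x) ^ 2 - 4 * Real.cosh (s * x) ^ 4 - 3 * A) /
        (Real.cosh (s * x) ^ 3 * (2 * Real.cosh (s * x) ^ 2 - A) ^ 2)) x := by
  have hu : ∀ y : ℝ, HasDerivAt (fun y : ℝ => 2 * Real.cosh (s * y) ^ 2)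
      ((2:ℝ) * ((2:ℕ) * Real.cosh (s*y) ^ 1 * (Real.sinh (s*y) * s))) y :=
    fun y => ((aux_cosh s y).pow 2).const_mul 2
  have hN : HasDerivAt (fun y : ℝ => A * s ^ 2 * (2 * Real.cosh (s * y) ^ 2 - 3))
      ((A * s ^ 2) * ((2:ℝ) * ((2:ℕ) * Real.cosh (s*x) ^ 1 * (Real.sinh (s*x) * s)))) x :=
    (((hu x).sub_const 3)).const_mul (A * s ^ 2)
  have hD : HasDerivAt (fun y : ℝ => 2 * Real.cosh (s * y) ^ 2 * (2 * Real.cosh (s * y) ^ 2 - A))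
      ((2:ℝ) * ((2:ℕ) * Real.cosh (s*x) ^ 1 * (Real.sinh (s*x) * s)) * (2 * Real.cosh (s*x) ^ 2 - A)
        + 2 * Real.cosh (s*x) ^ 2 * ((2:ℝ) * ((2:ℕ) * Real.cosh (s*x) ^ 1 * (Real.sinh (s*x) * s)))) x :=
    (hu x).mul ((hu x).sub_const A)
  have hC := cosh_ne (s*x)
  have h1 : (1:ℝ) ≤ Real.cosh (s*x) := Real.one_le_cosh _
  have h2C : (0:ℝ) < 2 * Real.cosh (s*x) ^ 2 - A := by nlinarith
  have hDne : 2 * Real.cosh (s*x) ^ 2 * (2 * Real.cosh (s*x) ^ 2 - A) ≠ 0 := by positivity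
  have h2Cne : 2 * Real.cosh (s*x) ^ 2 - A ≠ 0 := h2C.ne'
  have h := hN.fun_div hD hDne
  refine h.congr_deriv (Eq.symm ?_)
  field_simp
  ring

private lemma main_aux (A s : ℝ) (hA2 : A < 2) (hs2 : 4 * s ^ 2 = A) (x : ℝ) :
    -deriv (fun y : ℝ => deriv (deriv (fun y : ℝ => A / (2 * Real.cosh (s * y) ^ 2))) y /
        (4 * (1 - (fun y : ℝ => A / (2 * Real.cosh (s * y) ^ 2)) y))) x
      + ((A - 6 * (fun y : ℝ => A / (2 * Real.cosh (s * y) ^ 2)) x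
            + 3 * ((fun y : ℝ => A / (2 * Real.cosh (s * y) ^ 2)) x) ^ 2) /
          (4 * (1 - (fun y : ℝ => A / (2 * Real.cosh (s * y) ^ 2)) x) ^ 2)) *
        deriv (fun y : ℝ => A / (2 * Real.cosh (s * y) ^ 2)) x = 0 := by
  have hd1 : deriv (fun y : ℝ => A / (2 * Real.cosh (s * y) ^ 2)) =
      fun y : ℝ => -(A * s * Real.sinh (s * y)) / Real.cosh (s * y) ^ 3 :=
    funext fun y => (aux1 A s y).deriv
  have hd2 : deriv (deriv (fun y : ℝ => A / (2 * Real.cosh (s * y) ^ 2))) =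
      fun y : ℝ => A * s ^ 2 * (2 * Real.cosh (s * y) ^ 2 - 3) / Real.cosh (s * y) ^ 4 := by
    rw [hd1]; exact funext fun y => (aux2 A s y).deriv
  have hQ : (fun y : ℝ => deriv (deriv (fun y : ℝ => A / (2 * Real.cosh (s * y) ^ 2))) y /
        (4 * (1 - (fun y : ℝ => A / (2 * Real.cosh (s * y) ^ 2)) y))) =
      fun y : ℝ => A * s ^ 2 * (2 * Real.cosh (s * y) ^ 2 - 3) /
        (2 * Real.cosh (s * y) ^ 2 * (2 * Real.cosh (s * y) ^ 2 - A)) := by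
    funext y
    simp only
    rw [hd2]
    have hC := cosh_ne (s*y)
    have h1 : (1:ℝ) ≤ Real.cosh (s*y) := Real.one_le_cosh _
    have h2C : (0:ℝ) < 2 * Real.cosh (s*y) ^ 2 - A := by nlinarith
    field_simp
    ring
  rw [hQ, (aux3 A s x hA2).deriv, hd1]
  simp only
  have hC := cosh_ne (s*x)
  have h1 : (1:ℝ) ≤ Real.cosh (s*x) := Real.one_le_cosh _
  have h2C : (0:ℝ) < 2 * Real.cosh (s*x) ^ 2 - A := by nlinarith
  have hη1 : (0:ℝ) < 1 - A / (2 * Real.cosh (s * x) ^ 2) := by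
    rw [sub_pos, div_lt_one (by positivity)]; linarith
  rw [← hs2] at h2C hη1 ⊢
  field_simp [hC, h2C.ne', hη1.ne']
  ring

/-- The derivative `η_c'` lies in the kernel of the Sturm-Liouville operator `𝓛_c`. -/
theorem deriv_eta_in_kernel (c : ℝ) (hc0 : c ≠ 0) (hc : |c| < Real.sqrt 2)
    (η : ℝ → ℝ)
    (hη : ∀ x : ℝ, η x =
      (2 - c ^ 2) / (2 * (Real.cosh (Real.sqrt (2 - c ^ 2) * x / 2)) ^ 2)) :
    ∀ x : ℝ,
      -deriv (fun y : ℝ => deriv (deriv η) y / (4 * (1 - η y))) x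
        + ((2 - c ^ 2 - 6 * η x + 3 * (η x) ^ 2) / (4 * (1 - η x) ^ 2)) * deriv η x = 0 := by
  have hc2 : c ^ 2 < 2 := by
    have h2 : Real.sqrt 2 ^ 2 = 2 := Real.sq_sqrt (by norm_num)
    nlinarith [sq_abs c, abs_nonneg c, Real.sqrt_nonneg 2]
  have hA0 : (0:ℝ) < 2 - c ^ 2 := by linarith
  have hA2 : 2 - c ^ 2 < 2 := by
    have : (0:ℝ) < c ^ 2 := by positivity
    linarith
  have hs2 : 4 * (Real.sqrt (2 - c ^ 2) / 2) ^ 2 = 2 - c ^ 2 := by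
    rw [div_pow, Real.sq_sqrt hA0.le]; ring
  have hηf : η = fun y : ℝ => (2 - c ^ 2) / (2 * Real.cosh (Real.sqrt (2 - c ^ 2) / 2 * y) ^ 2) := by
    funext y
    rw [hη y]
    congr 2
    ring_nf
  subst hηf
  intro x
  exact main_aux (2 - c ^ 2) (Real.sqrt (2 - c ^ 2) / 2) hA2 hs2 x
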